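/- Let ξ and π be pdfs on ℝ with ξ ⪰_m π, and let d be a distortion function. Then ∫_ℝ d(e) ξ^σ(e) de ≤ ∫_ℝ d(e) π^σ(e) de (integrals in [0, ∞]). -/

import Mathlib

open MeasureTheory Set
open scoped ENNReal NNReal

noncomputable section

/-- A probability density function on ℝ: measurable, nonnegative (via `ℝ≥0`),
integrating to one against Lebesgue measure. -/
def IsPdf (f : ℝ → ℝ≥0) : Prop :=
  Measurable f ∧ ∫⁻ x, (f x : ℝ≥0∞) = 1

/-- `f` is symmetric and unimodal about `c`. -/
def ASU (c : ℝ) (f : ℝ → ℝ≥0) : Prop :=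
  (∀ x, f (c - x) = f (c + x)) ∧ MonotoneOn f (Iic c) ∧ AntitoneOn f (Ici c)

/-- A distortion function: measurable, even, nondecreasing on `[0, ∞)`. -/
def IsDistortion (d : ℝ → ℝ≥0∞) : Prop :=
  Measurable d ∧ (∀ x, d (-x) = d x) ∧ MonotoneOn d (Ici (0 : ℝ))

/-- Symmetric decreasing rearrangement of an `ℝ≥0∞`-valued function:
`f^σ(x) = ∫_0^∞ 1[2|x| < vol{z : f z > ρ}] dρ`. -/
def sdr (f : ℝ → ℝ≥0∞) (x : ℝ) : ℝ≥0∞ :=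
  ∫⁻ ρ in Ioi (0 : ℝ),
    if ENNReal.ofReal (2 * |x|) < volume {z : ℝ | ENNReal.ofReal ρ < f z} then 1 else 0

/-- Symmetric decreasing rearrangement of an `ℝ≥0`-valued function. -/
def sdr' (f : ℝ → ℝ≥0) : ℝ → ℝ≥0∞ := sdr fun x => (f x : ℝ≥0∞)

/-- `ξ` majorizes `π`: `∫_{-ρ}^{ρ} ξ^σ ≥ ∫_{-ρ}^{ρ} π^σ` for all `ρ ≥ 0`. -/
def Majorizes (ξ π : ℝ → ℝ≥0) : Prop :=
  ∀ ρ : ℝ, 0 ≤ ρ → ∫⁻ x in Ioo (-ρ) ρ, sdr' π x ≤ ∫⁻ x in Ioo (-ρ) ρ, sdr' ξ x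

/-- The inequality `D(π^σ) ≥ D(ξ^σ)`: if `ξ` majorizes `π` then
`∫ d(e) ξ^σ(e) de ≤ ∫ d(e) π^σ(e) de` for every distortion function `d`. -/
lemma vol_sym (m : ℝ≥0∞) : volume {x : ℝ | ENNReal.ofReal (2 * |x|) < m} = m := by
  rcases eq_or_ne m ⊤ with hm | hm
  · simp only [hm, ENNReal.ofReal_lt_top, setOf_true]
    simp [Real.volume_univ]
  · have hset : {x : ℝ | ENNReal.ofReal (2 * |x|) < m} = Ioo (-(m.toReal / 2)) (m.toReal / 2) := by
      ext x
      simp only [mem_setOf_eq, mem_Ioo]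
      rw [ENNReal.ofReal_lt_iff_lt_toReal (by positivity) hm]
      rw [show (2 * |x| < m.toReal ↔ |x| < m.toReal / 2) by constructor <;> intro <;> linarith,
        abs_lt]
    rw [hset, Real.volume_Ioo]
    rcases eq_or_ne m 0 with h0 | h0
    · simp [h0]
    · rw [show m.toReal / 2 - -(m.toReal / 2) = m.toReal by ring, ENNReal.ofReal_toReal hm]

lemma layer_ennreal (a : ℝ≥0∞) :
    ∫⁻ t in Ioi (0 : ℝ), (if ENNReal.ofReal t < a then (1 : ℝ≥0∞) else 0) = a := by
  have h1 : ∀ t : ℝ, (if ENNReal.ofReal t < a then (1 : ℝ≥0∞) else 0)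
      = ({t : ℝ | ENNReal.ofReal t < a}).indicator (fun _ => (1 : ℝ≥0∞)) t := by
    intro t; simp [Set.indicator_apply]
  have hmeas : MeasurableSet {t : ℝ | ENNReal.ofReal t < a} :=
    measurableSet_lt (by measurability) measurable_const
  simp only [h1]
  rw [lintegral_indicator hmeas, Measure.restrict_restrict hmeas, lintegral_one,
    Measure.restrict_apply MeasurableSet.univ, univ_inter]
  rcases eq_or_ne a ⊤ with ha | ha
  · have : {t : ℝ | ENNReal.ofReal t < a} = univ := by ext t; simp [ha]
    simp [this, Real.volume_Ioi, ha]
  · have : {t : ℝ | ENNReal.ofReal t < a} ∩ Ioi 0 = Ioo 0 a.toReal := by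
      ext t
      simp only [mem_inter_iff, mem_setOf_eq, mem_Ioi, mem_Ioo]
      constructor
      · rintro ⟨h1, h2⟩
        exact ⟨h2, (ENNReal.ofReal_lt_iff_lt_toReal (le_of_lt h2) ha).mp h1⟩
      · rintro ⟨h1, h2⟩
        exact ⟨(ENNReal.ofReal_lt_iff_lt_toReal (le_of_lt h1) ha).mpr h2, h1⟩
    rw [this, Real.volume_Ioo, sub_zero, ENNReal.ofReal_toReal ha]

def mfun (f : ℝ → ℝ≥0) (ρ : ℝ) : ℝ≥0∞ := volume {z : ℝ | ENNReal.ofReal ρ < (f z : ℝ≥0∞)}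

lemma mfun_antitone (f : ℝ → ℝ≥0) : Antitone (mfun f) := fun a b hab =>
  measure_mono fun z hz => lt_of_le_of_lt (ENNReal.ofReal_le_ofReal hab) hz

lemma mfun_measurable (f : ℝ → ℝ≥0) : Measurable (mfun f) := (mfun_antitone f).measurable

lemma sdr'_eq (f : ℝ → ℝ≥0) (x : ℝ) :
    sdr' f x = ∫⁻ ρ in Ioi (0 : ℝ),
      (if ENNReal.ofReal (2 * |x|) < mfun f ρ then (1 : ℝ≥0∞) else 0) := rfl

lemma joint_meas (f : ℝ → ℝ≥0) :
    Measurable (fun p : ℝ × ℝ =>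
      (if ENNReal.ofReal (2 * |p.1|) < mfun f p.2 then (1 : ℝ≥0∞) else 0)) := by
  have : Measurable fun p : ℝ × ℝ => ENNReal.ofReal (2 * |p.1|) := by measurability
  exact Measurable.ite (measurableSet_lt this ((mfun_measurable f).comp measurable_snd))
    measurable_const measurable_const

lemma sdr'_measurable (f : ℝ → ℝ≥0) : Measurable (sdr' f) := by
  simp only [funext (sdr'_eq f)]
  exact Measurable.lintegral_prod_right (ν := volume.restrict (Ioi (0:ℝ)))
    (f := fun x ρ => (if ENNReal.ofReal (2 * |x|) < mfun f ρ then (1 : ℝ≥0∞) else 0))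
    (joint_meas f)

/-- The rearrangement has the same total integral. -/
lemma sdr'_lintegral (f : ℝ → ℝ≥0) (hf : Measurable f) :
    ∫⁻ x, sdr' f x = ∫⁻ x, (f x : ℝ≥0∞) := by
  simp only [sdr'_eq]
  rw [lintegral_lintegral_swap ((joint_meas f).aemeasurable)]
  have h1 : ∀ ρ : ℝ, ∫⁻ x, (if ENNReal.ofReal (2 * |x|) < mfun f ρ then (1 : ℝ≥0∞) else 0)
      = mfun f ρ := by
    intro ρ
    have : ∀ x : ℝ, (if ENNReal.ofReal (2 * |x|) < mfun f ρ then (1 : ℝ≥0∞) else 0)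
        = ({x : ℝ | ENNReal.ofReal (2 * |x|) < mfun f ρ}).indicator (fun _ => (1:ℝ≥0∞)) x := by
      intro x; simp [Set.indicator_apply]
    simp only [this]
    rw [lintegral_indicator, lintegral_one, Measure.restrict_apply MeasurableSet.univ, univ_inter]
    · exact vol_sym _
    · exact measurableSet_lt (by measurability) measurable_const
  simp only [h1]
  have h2 : ∫⁻ x, (f x : ℝ≥0∞) = ∫⁻ x, ENNReal.ofReal ((f x : ℝ)) := by
    simp [ENNReal.ofReal_coe_nnreal]
  rw [h2, lintegral_eq_lintegral_meas_lt volume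
      (Filter.Eventually.of_forall fun x => (f x).coe_nonneg)
      (by exact (measurable_coe_nnreal_real.comp hf).aemeasurable)]
  apply setLIntegral_congr_fun measurableSet_Ioi
  intro ρ hρ
  unfold mfun
  congr 1
  ext z
  simp only [mem_setOf_eq]
  rw [← ENNReal.ofReal_coe_nnreal,
    ENNReal.ofReal_lt_ofReal_iff_of_nonneg (le_of_lt hρ)]

/-- A "balanced" set is a.e. equal to `∅`, `univ`, or a symmetric open interval;
hence majorization gives the comparison over it. -/
lemma balanced_le (ξ π : ℝ → ℝ≥0) (hmaj : Majorizes ξ π)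
    (hξ1 : ∫⁻ x, sdr' ξ x = 1) (hπ1 : ∫⁻ x, sdr' π x = 1)
    (A : Set ℝ) (hbal : ∀ e ∈ A, ∀ x : ℝ, |x| ≤ |e| → x ∈ A) :
    ∫⁻ e in A, sdr' π e ≤ ∫⁻ e in A, sdr' ξ e := by
  rcases A.eq_empty_or_nonempty with hA | ⟨e₀, he₀⟩
  · simp [hA]
  by_cases hb : BddAbove (abs '' A)
  · set r := sSup (abs '' A) with hr
    have hr0 : 0 ≤ r := le_trans (abs_nonneg e₀) (le_csSup hb ⟨e₀, he₀, rfl⟩)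
    have hsub1 : Ioo (-r) r ⊆ A := by
      intro x hx
      have hxr : |x| < r := abs_lt.mpr ⟨hx.1, hx.2⟩
      have hne : (abs '' A).Nonempty := ⟨|e₀|, e₀, he₀, rfl⟩
      obtain ⟨v, ⟨e, he, rfl⟩, hv⟩ := exists_lt_of_lt_csSup hne hxr
      exact hbal e he x (le_of_lt hv)
    have hsub2 : A ⊆ Icc (-r) r := fun e he =>
      abs_le.mp (le_csSup hb ⟨e, he, rfl⟩)
    have hsub3 : A \ Ioo (-r) r ⊆ {-r, r} := by
      rintro e ⟨he, hne⟩
      have h2 := hsub2 he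
      simp only [mem_Ioo, not_and_or, not_lt] at hne
      rcases hne with h | h
      · exact Or.inl (le_antisymm h h2.1)
      · exact Or.inr (le_antisymm h2.2 h)
    have hae : A =ᵐ[volume] Ioo (-r) r := by
      rw [MeasureTheory.ae_eq_set]
      refine ⟨measure_mono_null hsub3
        (measure_union_null (measure_singleton (-r)) (measure_singleton r)), ?_⟩
      rw [diff_eq_empty.mpr hsub1]; simp
    rw [setLIntegral_congr hae, setLIntegral_congr hae]
    exact hmaj r hr0
  · have hA : A = univ := by
      apply eq_univ_of_forall
      intro x
      obtain ⟨v, ⟨e, he, rfl⟩, hv⟩ := (not_bddAbove_iff.mp hb) |x|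
      exact hbal e he x (le_of_lt hv)
    rw [hA]
    simp only [Measure.restrict_univ]
    rw [hξ1, hπ1]

theorem stmt8 (ξ π : ℝ → ℝ≥0) (hξ : IsPdf ξ) (hπ : IsPdf π)
    (hmaj : Majorizes ξ π) (d : ℝ → ℝ≥0∞) (hd : IsDistortion d) :
    ∫⁻ e, d e * sdr' ξ e ≤ ∫⁻ e, d e * sdr' π e := by
  obtain ⟨hdm, hdeven, hdmono⟩ := hd
  have hξ1 : ∫⁻ x, sdr' ξ x = 1 := (sdr'_lintegral ξ hξ.1).trans hξ.2
  have hπ1 : ∫⁻ x, sdr' π x = 1 := (sdr'_lintegral π hπ.1).trans hπ.2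
  have habs : ∀ x : ℝ, d x = d |x| := by
    intro x
    rcases le_or_gt 0 x with h | h
    · rw [abs_of_nonneg h]
    · rw [abs_of_neg h, ← hdeven x]
  -- rewrite d via layer cake and push the factor outside
  have key : ∀ g : ℝ → ℝ≥0, Measurable g →
      ∫⁻ e, d e * sdr' g e
        = ∫⁻ t in Ioi (0:ℝ), ∫⁻ e, (if ENNReal.ofReal t < d e then sdr' g e else 0) := by
    intro g hg
    have step1 : ∀ e : ℝ, d e * sdr' g e
        = ∫⁻ t in Ioi (0:ℝ), (if ENNReal.ofReal t < d e then sdr' g e else 0) := by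
      intro e
      calc d e * sdr' g e
          = (∫⁻ t in Ioi (0:ℝ), (if ENNReal.ofReal t < d e then (1:ℝ≥0∞) else 0)) * sdr' g e := by
            rw [layer_ennreal]
        _ = ∫⁻ t in Ioi (0:ℝ), (if ENNReal.ofReal t < d e then (1:ℝ≥0∞) else 0) * sdr' g e :=
            (lintegral_mul_const (sdr' g e)
              (Measurable.ite (measurableSet_lt ENNReal.measurable_ofReal measurable_const)
                measurable_const measurable_const)).symm
        _ = ∫⁻ t in Ioi (0:ℝ), (if ENNReal.ofReal t < d e then sdr' g e else 0) :=
            lintegral_congr fun t => by by_cases h : ENNReal.ofReal t < d e <;> simp [h]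
    simp only [step1]
    rw [lintegral_lintegral_swap]
    apply Measurable.aemeasurable
    apply Measurable.ite
    · exact measurableSet_lt
        (ENNReal.measurable_ofReal.comp measurable_snd) (hdm.comp measurable_fst)
    · exact (sdr'_measurable g).comp measurable_fst
    · exact measurable_const
  rw [key ξ hξ.1, key π hπ.1]
  apply lintegral_mono
  intro t
  -- inner integrals are set integrals over U = {e | ofReal t < d e}
  set U : Set ℝ := {e | ENNReal.ofReal t < d e} with hU
  have hUm : MeasurableSet U := measurableSet_lt measurable_const hdm
  have hind : ∀ g : ℝ → ℝ≥0,
      ∫⁻ e, (if ENNReal.ofReal t < d e then sdr' g e else 0) = ∫⁻ e in U, sdr' g e := by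
    intro g
    rw [← lintegral_indicator hUm]
    exact lintegral_congr fun e => by
      by_cases h : ENNReal.ofReal t < d e <;>
        simp [Set.indicator_apply, hU, Set.mem_setOf_eq, h]
  simp only []
  rw [hind ξ, hind π]
  -- the complement of U is balanced
  have hbal : ∀ e ∈ Uᶜ, ∀ x : ℝ, |x| ≤ |e| → x ∈ Uᶜ := by
    intro e he x hxe
    simp only [mem_compl_iff, hU, mem_setOf_eq, not_lt] at he ⊢
    calc d x = d |x| := habs x
      _ ≤ d |e| := hdmono (abs_nonneg x) (abs_nonneg e) hxe
      _ = d e := (habs e).symm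
      _ ≤ ENNReal.ofReal t := he
  have hcomp : ∫⁻ e in Uᶜ, sdr' π e ≤ ∫⁻ e in Uᶜ, sdr' ξ e :=
    balanced_le ξ π hmaj hξ1 hπ1 Uᶜ hbal
  have hsplitξ : (∫⁻ e in U, sdr' ξ e) + ∫⁻ e in Uᶜ, sdr' ξ e = 1 :=
    (lintegral_add_compl (sdr' ξ) hUm).trans hξ1
  have hsplitπ : (∫⁻ e in U, sdr' π e) + ∫⁻ e in Uᶜ, sdr' π e = 1 :=
    (lintegral_add_compl (sdr' π) hUm).trans hπ1
  have hfin : ∫⁻ e in Uᶜ, sdr' ξ e ≠ ⊤ := by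
    intro h
    rw [h] at hsplitξ
    simp at hsplitξ
  rw [← ENNReal.add_le_add_iff_right hfin]
  calc (∫⁻ e in U, sdr' ξ e) + ∫⁻ e in Uᶜ, sdr' ξ e = 1 := hsplitξ
    _ = (∫⁻ e in U, sdr' π e) + ∫⁻ e in Uᶜ, sdr' π e := hsplitπ.symm
    _ ≤ (∫⁻ e in U, sdr' π e) + ∫⁻ e in Uᶜ, sdr' ξ e := add_le_add_right hcomp _
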